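/- arXiv:2006.01086 — 6 statements merged into one kernel-verified Lean document; each statement's English description precedes it below -/
import Mathlib

section
/- Suppose that κ < λ are infinite cardinals such that λ is regular and <κ-inaccessible. Suppose also that U is a Δ-system consisting of sets of ordinals (i.e., there is a set r with u ∩ v = r for all distinct u, v ∈ U), that |U| ≥ λ, and that |u| < κ for all u ∈ U. Then there is U* ⊆ U such that |U*| = λ and U* is a uniform Δ-system, i.e., there is a set r such that for all distinct u, v ∈ U*, u and v are aligned and u ∩ v = r. -/
open Cardinal Set

noncomputable section

/-- The order type of a set of ordinals. -/
noncomputable def otp (s : Set Ordinal.{0}) : Ordinal.{0} :=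
  sInf {o : Ordinal.{0} | Nonempty (s ≃o Set.Iio o)}

/-- The `i`-th element of a set of ordinals, in increasing order. -/
noncomputable def nth (s : Set Ordinal.{0}) (i : Ordinal.{0}) : Ordinal.{0} :=
  sInf {α | α ∈ s ∧ otp (s ∩ Set.Iio α) = i}

/-- `a[m] = {a(i) : i ∈ m}`. -/
noncomputable def img (a m : Set Ordinal.{0}) : Set Ordinal.{0} := nth a '' m

/-- Two sets of ordinals are aligned. -/
def Aligned (a b : Set Ordinal.{0}) : Prop :=
  otp a = otp b ∧ ∀ γ ∈ a ∩ b, otp (a ∩ Set.Iio γ) = otp (b ∩ Set.Iio γ)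

/-- `r(a,b) = {i < otp a | a(i) ∈ b}`. -/
noncomputable def idx (a b : Set Ordinal.{0}) : Set Ordinal.{0} :=
  {i | i < otp a ∧ nth a i ∈ b}

/-- `[H]^n`: the `n`-element subsets of `H`. -/
def sizeN (H : Set Ordinal.{0}) (n : ℕ) : Set (Set Ordinal.{0}) :=
  {b | b ⊆ H ∧ b.Finite ∧ b.ncard = n}

/-- `[H]^λ`: the subsets of `H` of cardinality `λ`. -/
def sizeC (H : Set Ordinal.{0}) (lam : Cardinal.{0}) : Set (Set Ordinal.{0}) :=
  {A | A ⊆ H ∧ #A = Cardinal.lift.{1,0} lam}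

/-- uniform n-dimensional Δ-system with explicit witnesses. -/
def IsUnifDeltaSysWith (H : Set Ordinal.{0}) (n : ℕ) (u : Set Ordinal.{0} → Set Ordinal.{0})
    (ρ : Ordinal.{0}) (r : Set Ordinal.{0} → Set Ordinal.{0}) : Prop :=
  (∀ m ⊆ Set.Iio (n : Ordinal.{0}), r m ⊆ Set.Iio ρ) ∧
  (∀ b ∈ sizeN H n, otp (u b) = ρ) ∧
  (∀ m ⊆ Set.Iio (n : Ordinal.{0}), ∀ a ∈ sizeN H n, ∀ b ∈ sizeN H n,
    Aligned a b → idx a b = m →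
    Aligned (u a) (u b) ∧ idx (u a) (u b) = r m) ∧
  (∀ m₀ ⊆ Set.Iio (n : Ordinal.{0}), ∀ m₁ ⊆ Set.Iio (n : Ordinal.{0}),
    r (m₀ ∩ m₁) = r m₀ ∩ r m₁)

def IsUnifDeltaSys (H : Set Ordinal.{0}) (n : ℕ) (u : Set Ordinal.{0} → Set Ordinal.{0}) : Prop :=
  ∃ ρ r, IsUnifDeltaSysWith H n u ρ r

/-- (not necessarily uniform) n-dimensional Δ-system. -/
def IsDeltaSys (H : Set Ordinal.{0}) (n : ℕ) (u : Set Ordinal.{0} → Set Ordinal.{0}) : Prop :=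
  ∃ R : Set Ordinal.{0} → Set Ordinal.{0} → Set Ordinal.{0},
    ∀ m ⊆ Set.Iio (n : Ordinal.{0}), ∀ b ∈ sizeN H n, ∀ b' ∈ sizeN H n,
      Aligned b b' → idx b b' = m → u b ∩ u b' = R m (b ∩ b')

/-- `σ(λ, n+1)` in the paper's notation (so indices shift by one). -/
noncomputable def sigmaC (lam : Cardinal.{0}) : ℕ → Cardinal.{0}
  | 0 => lam
  | n + 1 => Order.succ ((2 : Cardinal.{0}) ^< sigmaC lam n)

/-- `μ → (λ)^n_ν`. -/
def PartitionRel (μ lam ν : Cardinal.{0}) (n : ℕ) : Prop :=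
  ∀ c : Set Ordinal.{0} → Ordinal.{0},
    (∀ b ∈ sizeN (Set.Iio μ.ord) n, c b < ν.ord) →
    ∃ H ∈ sizeC (Set.Iio μ.ord) lam, ∃ k, ∀ b ∈ sizeN H n, c b = k

noncomputable def tpInt (a b : Set Ordinal.{0}) : Set (Ordinal.{0} × Ordinal.{0}) :=
  {p | p.1 < otp a ∧ p.2 < otp b ∧ nth a p.1 = nth b p.2}

def AlignedAbove (a b : Set Ordinal.{0}) (i : Ordinal.{0}) : Prop :=
  Aligned (img a (Set.Ico i (otp a))) (img b (Set.Ico i (otp b)))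

def MPossible (a : Set Ordinal.{0}) (m : ℕ) (α : Ordinal.{0}) : Prop :=
  (0 < m → nth a ((m - 1 : ℕ) : Ordinal.{0}) < α) ∧
  (((m + 1 : ℕ) : Ordinal.{0}) < otp a → α < nth a ((m + 1 : ℕ) : Ordinal.{0}))

noncomputable def replaceNth (a : Set Ordinal.{0}) (m : ℕ) (α : Ordinal.{0}) : Set Ordinal.{0} :=
  (a \ {nth a (m : Ordinal.{0})}) ∪ {α}

def MoreoverClause (H : Set Ordinal.{0}) (n : ℕ) (u : Set Ordinal.{0} → Set Ordinal.{0}) : Prop :=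
  ∀ a ∈ sizeN H n, ∀ b ∈ sizeN H n, ∀ m : ℕ, m < n →
    AlignedAbove a b (m : Ordinal.{0}) → nth a (m : Ordinal.{0}) = nth b (m : Ordinal.{0}) →
    ∀ α ∈ H, MPossible a m α → MPossible b m α →
      tpInt (u a) (u b) = tpInt (u (replaceNth a m α)) (u (replaceNth b m α))

lemma small_of_mk_lt_lift {s : Set Ordinal.{0}} {κ : Cardinal.{0}}
    (h : #s < Cardinal.lift.{1,0} κ) : Small.{0} ↥s := by
  rw [Cardinal.small_iff_lift_mk_lt_univ]
  simpa using h.trans (Cardinal.lift_lt_univ κ)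

lemma exists_orderIso_Iio_set {γ : Type} [LinearOrder γ] [WellFoundedLT γ] (t : Set γ) :
    ∃ o : Ordinal.{0}, Nonempty (↥t ≃o Set.Iio o) := by
  haveI : IsWellOrder γ (· < ·) := inferInstance
  refine ⟨Ordinal.type (Subrel ((· < ·) : γ → γ → Prop) (· ∈ t)), ⟨?_⟩⟩
  exact (OrderIso.ofRelIsoLT (Ordinal.enum (Subrel ((· < ·) : γ → γ → Prop) (· ∈ t)))).symm

lemma exists_orderIso_Iio (s : Set Ordinal.{0}) [Small.{0} ↥s] :
    ∃ o : Ordinal.{0}, Nonempty (↥s ≃o Set.Iio o) := by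
  obtain ⟨b, hb⟩ := Ordinal.bddAbove_of_small (s := s)
  let e := Ordinal.ToType.mk (o := Order.succ b)
  let f : ↥s → (Order.succ b).ToType := fun x => e ⟨x.1, Order.lt_succ_iff.2 (hb x.2)⟩
  have hf : StrictMono f := fun x y h => e.strictMono (by exact_mod_cast h)
  obtain ⟨o, ⟨g⟩⟩ := exists_orderIso_Iio_set (Set.range f)
  exact ⟨o, ⟨(hf.orderIso f).trans g⟩⟩

lemma nonempty_orderIso_otp (s : Set Ordinal.{0}) [Small.{0} ↥s] :
    Nonempty (↥s ≃o Set.Iio (otp s)) :=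
  csInf_mem (exists_orderIso_Iio s)

lemma mk_eq_lift_card_otp (s : Set Ordinal.{0}) [Small.{0} ↥s] :
    #s = Cardinal.lift.{1,0} (otp s).card := by
  obtain ⟨g⟩ := nonempty_orderIso_otp s
  rw [Cardinal.mk_congr g.toEquiv, Ordinal.mk_Iio_ordinal]

lemma otp_lt_ord {s : Set Ordinal.{0}} {κ : Cardinal.{0}} (h : #s < Cardinal.lift.{1,0} κ) :
    otp s < κ.ord := by
  haveI := small_of_mk_lt_lift h
  rw [Cardinal.lt_ord]
  rw [mk_eq_lift_card_otp s] at h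
  exact_mod_cast Cardinal.lift_lt.1 h

lemma isRegular_lift {c : Cardinal.{0}} (h : c.IsRegular) :
    (Cardinal.lift.{1,0} c).IsRegular := by
  constructor
  · rw [← Cardinal.lift_aleph0.{1,0}]
    exact Cardinal.lift_le.2 h.1
  · rw [← Cardinal.lift_ord, ← Ordinal.lift_cof]
    exact Cardinal.lift_le.2 h.2


/-- the classical Δ-system lemma refinement to a *uniform* Δ-system:
if `κ < λ` are infinite cardinals, `λ` regular and `<κ`-inaccessible, and `U` is a
Δ-system of sets of ordinals (with root `r`), `|U| ≥ λ`, `|u| < κ` for all `u ∈ U`,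
then some `U* ⊆ U` of cardinality `λ` is a uniform Δ-system. -/
theorem stmt0 (κ lam : Cardinal.{0}) (hk : ℵ₀ ≤ κ) (hkl : κ < lam)
    (hreg : lam.IsRegular) (hinacc : ∀ ν < lam, ν ^< κ < lam)
    (U : Set (Set Ordinal.{0})) (r : Set Ordinal.{0})
    (hroot : ∀ u ∈ U, ∀ v ∈ U, u ≠ v → u ∩ v = r)
    (hsize : Cardinal.lift.{1,0} lam ≤ #U)
    (hsmall : ∀ u ∈ U, #u < Cardinal.lift.{1,0} κ) :
    ∃ U' ⊆ U, #U' = Cardinal.lift.{1,0} lam ∧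
      ∃ r' : Set Ordinal.{0}, ∀ u ∈ U', ∀ v ∈ U', u ≠ v → Aligned u v ∧ u ∩ v = r' := by
  -- r is small
  have hnt : Nontrivial ↥U := by
    rw [← Cardinal.one_lt_iff_nontrivial]
    refine lt_of_lt_of_le ?_ hsize
    calc (1 : Cardinal.{1}) < ℵ₀ := one_lt_aleph0
    _ = Cardinal.lift.{1,0} ℵ₀ := by simp
    _ ≤ Cardinal.lift.{1,0} lam := Cardinal.lift_le.2 hreg.1
  obtain ⟨⟨u0, hu0⟩, ⟨v0, hv0⟩, hne0⟩ := hnt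
  have hne0' : u0 ≠ v0 := fun h => hne0 (Subtype.ext h)
  have hrs : #r < Cardinal.lift.{1,0} κ := by
    rw [← hroot u0 hu0 v0 hv0 hne0']
    exact (Cardinal.mk_le_mk_of_subset inter_subset_left).trans_lt (hsmall u0 hu0)
  -- the classifying map
  have husmall : ∀ u ∈ U, ∀ γ : Ordinal.{0}, #(↥(u ∩ Iio γ)) < Cardinal.lift.{1,0} κ :=
    fun u hu γ => (Cardinal.mk_le_mk_of_subset inter_subset_left).trans_lt (hsmall u hu)
  let X := ↥(Iio κ.ord) × (↥r → ↥(Iio κ.ord))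
  let T : ↥U → X := fun u =>
    (⟨otp u.1, otp_lt_ord (hsmall u.1 u.2)⟩,
     fun γ => ⟨otp (u.1 ∩ Iio γ.1), otp_lt_ord (husmall u.1 u.2 γ.1)⟩)
  -- #X < lift lam
  have hIio : #(↥(Iio κ.ord)) = Cardinal.lift.{1,0} κ := by
    rw [Ordinal.mk_Iio_ordinal, Cardinal.card_ord]
  obtain ⟨μ, hμ⟩ := Cardinal.mem_range_lift_of_le hrs.le
  have hμκ : μ < κ := Cardinal.lift_lt.1 (by rw [hμ]; exact hrs)
  have hXcard : #X < Cardinal.lift.{1,0} lam := by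
    have harrow : #(↥r → ↥(Iio κ.ord)) = Cardinal.lift.{1,0} (κ ^ μ) := by
      rw [← Cardinal.power_def, hIio, ← hμ, ← Cardinal.lift_power]
    have : #X = Cardinal.lift.{1,0} (κ * κ ^ μ) := by
      rw [Cardinal.mk_prod, hIio, harrow, Cardinal.lift_id, Cardinal.lift_id, Cardinal.lift_mul]
    rw [this, Cardinal.lift_lt]
    refine Cardinal.mul_lt_of_lt hreg.1 hkl ?_
    exact lt_of_le_of_lt (Cardinal.le_powerlt κ hμκ) (hinacc κ hkl)
  -- pigeonhole
  have pigeon : ∃ x : X, Cardinal.lift.{1,0} lam ≤ #(T ⁻¹' {x}) := by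
    by_contra hcon
    push_neg at hcon
    have h1 : #(↥U) = Cardinal.sum fun x : X => #(T ⁻¹' {x}) := by
      rw [← Cardinal.mk_sigma]
      exact Cardinal.mk_congr (Equiv.sigmaFiberEquiv T).symm
    have h2 : Cardinal.sum (fun x : X => #(T ⁻¹' {x})) < Cardinal.lift.{1,0} lam :=
      Cardinal.sum_lt_lift_of_isRegular (isRegular_lift hreg) (by rwa [Cardinal.lift_id]) hcon
    exact absurd (hsize.trans_eq h1) (not_le.2 h2)
  obtain ⟨x, hx⟩ := pigeon
  obtain ⟨p, hpsub, hpcard⟩ := Cardinal.le_mk_iff_exists_subset.1 hx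
  refine ⟨Subtype.val '' p, ?_, ?_, r, ?_⟩
  · rintro _ ⟨⟨u, hu⟩, -, rfl⟩; exact hu
  · rw [Cardinal.mk_image_eq Subtype.val_injective, hpcard]
  · rintro _ ⟨⟨u, hu⟩, hup, rfl⟩ _ ⟨⟨v, hv⟩, hvp, rfl⟩ huv
    have hTu : T ⟨u, hu⟩ = x := hpsub hup
    have hTv : T ⟨v, hv⟩ = x := hpsub hvp
    have hT : T ⟨u, hu⟩ = T ⟨v, hv⟩ := hTu.trans hTv.symm
    have h1 : otp u = otp v := congrArg (fun y => (y.1 : Ordinal)) hT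
    have h2 : ∀ γ : ↥r, otp (u ∩ Iio γ.1) = otp (v ∩ Iio γ.1) := fun γ =>
      congrArg (fun y => (y.2 γ : Ordinal)) hT
    have hroot' : u ∩ v = r := hroot u hu v hv huv
    refine ⟨⟨h1, fun γ hγ => ?_⟩, hroot'⟩
    rw [hroot'] at hγ
    exact h2 ⟨γ, hγ⟩

end
end

section
/- Suppose that 1 ≤ n < ω, H is a set of ordinals, and ⟨u_b : b ∈ [H]^n⟩ is a uniform n-dimensional Δ-system as witnessed by an ordinal ρ and sets ⟨r_m : m ⊆ n⟩. Then for all m ⊆ n and all a, b ∈ [H]^n, if a[m] = b[m], then u_a[r_m] = u_b[r_m]. -/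
open Cardinal Set

noncomputable section

namespace Stmt1Aux

lemma iio_eq {o o' : Ordinal.{0}} (e : Set.Iio o ≃o Set.Iio o') : o = o' := by
  haveI i1 : IsWellOrder o.ToType (· < ·) := isWellOrder_lt
  haveI i2 : IsWellOrder o'.ToType (· < ·) := isWellOrder_lt
  have e1 := ((Ordinal.ToType.mk (o := o)).symm.trans e).trans (Ordinal.ToType.mk (o := o'))
  have h : Ordinal.type ((· < ·) : o.ToType → o.ToType → Prop) =
      Ordinal.type ((· < ·) : o'.ToType → o'.ToType → Prop) :=
    Ordinal.type_eq.2 ⟨e1.toRelIsoLT⟩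
  rwa [Ordinal.type_toType, Ordinal.type_toType] at h

lemma otp_of_iso {s : Set Ordinal.{0}} {o : Ordinal.{0}} (e : s ≃o Set.Iio o) : otp s = o := by
  have hne : {o' : Ordinal.{0} | Nonempty (s ≃o Set.Iio o')}.Nonempty := ⟨o, ⟨e⟩⟩
  obtain ⟨e'⟩ := csInf_mem hne
  exact iio_eq (e'.symm.trans e)

lemma iso_of_otp_ne_zero {s : Set Ordinal.{0}} (h : otp s ≠ 0) :
    Nonempty (s ≃o Set.Iio (otp s)) := by
  by_cases hne : {o : Ordinal.{0} | Nonempty (s ≃o Set.Iio o)}.Nonempty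
  · exact csInf_mem hne
  · exfalso
    apply h
    rw [Set.not_nonempty_iff_eq_empty] at hne
    show sInf _ = 0
    rw [hne, Ordinal.sInf_empty]

lemma otp_inter_Iio {s : Set Ordinal.{0}} {o : Ordinal.{0}} (e : s ≃o Set.Iio o)
    {γ : Ordinal.{0}} (hγ : γ ∈ s) :
    otp (s ∩ Set.Iio γ) = (e ⟨γ, hγ⟩ : Ordinal.{0}) := by
  have hlt : ∀ x : ↥(s ∩ Set.Iio γ), (e ⟨x.1, x.2.1⟩ : Ordinal.{0}) < (e ⟨γ, hγ⟩ : Ordinal.{0}) := by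
    intro x
    exact Subtype.coe_lt_coe.2 (e.strictMono (Subtype.mk_lt_mk.2 x.2.2))
  let f : ↥(s ∩ Set.Iio γ) → ↥(Set.Iio ((e ⟨γ, hγ⟩ : Ordinal.{0}))) :=
    fun x => ⟨(e ⟨x.1, x.2.1⟩ : Ordinal.{0}), hlt x⟩
  have hmono : StrictMono f := by
    intro x y hxy
    exact Subtype.mk_lt_mk.2 (Subtype.coe_lt_coe.2
      (e.strictMono (Subtype.mk_lt_mk.2 (Subtype.coe_lt_coe.2 hxy))))
  have hsurj : Function.Surjective f := by
    rintro ⟨j, hj⟩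
    have hjo : j ∈ Set.Iio o := Set.mem_Iio.2 (lt_trans hj (e ⟨γ, hγ⟩).2)
    have hyγ : (e.symm ⟨j, hjo⟩ : Ordinal.{0}) < γ := by
      have h2 : e.symm ⟨j, hjo⟩ < e.symm (e ⟨γ, hγ⟩) := by
        apply e.symm.strictMono
        exact Subtype.mk_lt_mk.2 hj
      rw [e.symm_apply_apply] at h2
      exact Subtype.coe_lt_coe.2 h2
    refine ⟨⟨(e.symm ⟨j, hjo⟩ : Ordinal.{0}), (e.symm ⟨j, hjo⟩).2, hyγ⟩, ?_⟩
    apply Subtype.ext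
    show (e ⟨(e.symm ⟨j, hjo⟩ : Ordinal.{0}), (e.symm ⟨j, hjo⟩).2⟩ : Ordinal.{0}) = j
    exact congrArg Subtype.val (e.apply_symm_apply ⟨j, hjo⟩)
  exact otp_of_iso (StrictMono.orderIsoOfSurjective f hmono hsurj)

lemma nth_of_iso {s : Set Ordinal.{0}} {o : Ordinal.{0}} (e : s ≃o Set.Iio o)
    {j : Ordinal.{0}} (hj : j < o) :
    nth s j = (e.symm ⟨j, hj⟩ : Ordinal.{0}) := by
  have hset : {α | α ∈ s ∧ otp (s ∩ Set.Iio α) = j} = {(e.symm ⟨j, hj⟩ : Ordinal.{0})} := by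
    ext α
    simp only [Set.mem_setOf_eq, Set.mem_singleton_iff]
    constructor
    · rintro ⟨hα, hotp⟩
      rw [otp_inter_Iio e hα] at hotp
      have h1 : e ⟨α, hα⟩ = ⟨j, hj⟩ := Subtype.ext hotp
      have h2 : (⟨α, hα⟩ : s) = e.symm ⟨j, hj⟩ := by
        rw [← h1, e.symm_apply_apply]
      exact congrArg Subtype.val h2
    · rintro rfl
      refine ⟨(e.symm ⟨j, hj⟩).2, ?_⟩
      rw [otp_inter_Iio e (e.symm ⟨j, hj⟩).2]
      exact congrArg Subtype.val (e.apply_symm_apply ⟨j, hj⟩)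
  rw [nth, hset, csInf_singleton]

lemma nth_mem_of_iso {s : Set Ordinal.{0}} {o : Ordinal.{0}} (e : s ≃o Set.Iio o)
    {j : Ordinal.{0}} (hj : j < o) : nth s j ∈ s := by
  rw [nth_of_iso e hj]; exact (e.symm ⟨j, hj⟩).2

lemma otp_inter_nth {s : Set Ordinal.{0}} {o : Ordinal.{0}} (e : s ≃o Set.Iio o)
    {j : Ordinal.{0}} (hj : j < o) : otp (s ∩ Set.Iio (nth s j)) = j := by
  rw [nth_of_iso e hj, otp_inter_Iio e (e.symm ⟨j, hj⟩).2]
  exact congrArg Subtype.val (e.apply_symm_apply ⟨j, hj⟩)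

lemma nth_lt_nth {s : Set Ordinal.{0}} {o : Ordinal.{0}} (e : s ≃o Set.Iio o)
    {j j' : Ordinal.{0}} (hj : j < o) (hj' : j' < o) (h : j < j') :
    nth s j < nth s j' := by
  rw [nth_of_iso e hj, nth_of_iso e hj']
  exact Subtype.coe_lt_coe.2 (e.symm.strictMono (Subtype.mk_lt_mk.2 h))

lemma nth_injOn {s : Set Ordinal.{0}} {o : Ordinal.{0}} (e : s ≃o Set.Iio o) :
    Set.InjOn (nth s) (Set.Iio o) := by
  intro j hj j' hj' heq
  by_contra hne
  rcases lt_or_gt_of_ne hne with h | h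
  · exact absurd heq (ne_of_lt (nth_lt_nth e hj hj' h))
  · exact absurd heq.symm (ne_of_lt (nth_lt_nth e hj' hj h))

lemma eq_nth_image {s : Set Ordinal.{0}} {o : Ordinal.{0}} (e : s ≃o Set.Iio o) :
    s = nth s '' Set.Iio o := by
  ext γ
  constructor
  · intro hγ
    refine ⟨(e ⟨γ, hγ⟩ : Ordinal.{0}), (e ⟨γ, hγ⟩).2, ?_⟩
    rw [nth_of_iso e (e ⟨γ, hγ⟩).2]
    exact congrArg Subtype.val (e.symm_apply_apply ⟨γ, hγ⟩)
  · rintro ⟨j, hj, rfl⟩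
    exact nth_mem_of_iso e hj

lemma nth_image_strictMonoOn {o : Ordinal.{0}} {f : Ordinal.{0} → Ordinal.{0}}
    (hf : StrictMonoOn f (Set.Iio o)) {j : Ordinal.{0}} (hj : j < o) :
    nth (f '' Set.Iio o) j = f j := by
  let g : ↥(Set.Iio o) → ↥(f '' Set.Iio o) := fun x => ⟨f x.1, Set.mem_image_of_mem f x.2⟩
  have hmono : StrictMono g := fun x y h => Subtype.mk_lt_mk.2 (hf x.2 y.2 (Subtype.coe_lt_coe.2 h))
  have hsurj : Function.Surjective g := by
    rintro ⟨_, j', hj', rfl⟩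
    exact ⟨⟨j', hj'⟩, rfl⟩
  let G := StrictMono.orderIsoOfSurjective g hmono hsurj
  rw [nth_of_iso G.symm hj]
  simp only [OrderIso.symm_symm]
  rfl

lemma iso_image_strictMonoOn {o : Ordinal.{0}} {f : Ordinal.{0} → Ordinal.{0}}
    (hf : StrictMonoOn f (Set.Iio o)) :
    Nonempty ((f '' Set.Iio o : Set Ordinal.{0}) ≃o Set.Iio o) := by
  let g : ↥(Set.Iio o) → ↥(f '' Set.Iio o) := fun x => ⟨f x.1, Set.mem_image_of_mem f x.2⟩
  have hmono : StrictMono g := fun x y h => Subtype.mk_lt_mk.2 (hf x.2 y.2 (Subtype.coe_lt_coe.2 h))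
  have hsurj : Function.Surjective g := by
    rintro ⟨_, j', hj', rfl⟩
    exact ⟨⟨j', hj'⟩, rfl⟩
  exact ⟨(StrictMono.orderIsoOfSurjective g hmono hsurj).symm⟩

lemma Iio_natCast (n : ℕ) :
    Set.Iio ((n : Ordinal.{0})) = (fun k : ℕ => (k : Ordinal.{0})) '' Set.Iio n := by
  ext o
  simp only [Set.mem_Iio, Set.mem_image]
  constructor
  · intro ho
    obtain ⟨k, rfl⟩ := Ordinal.lt_omega0.1 (ho.trans (Ordinal.nat_lt_omega0 n))
    exact ⟨k, Nat.cast_lt.1 ho, rfl⟩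
  · rintro ⟨k, hk, rfl⟩
    exact Nat.cast_lt.2 hk

lemma iio_nat_finite (n : ℕ) : (Set.Iio ((n : Ordinal.{0}))).Finite := by
  rw [Iio_natCast]; exact (Set.finite_Iio n).image _

lemma iio_nat_ncard (n : ℕ) : (Set.Iio ((n : Ordinal.{0}))).ncard = n := by
  rw [Iio_natCast, Set.ncard_image_of_injective _ (fun a b h => Nat.cast_inj.1 h)]
  rw [← Finset.coe_Iio, Set.ncard_coe_finset, Nat.card_Iio]

lemma iso_of_finite {s : Set Ordinal.{0}} (hs : s.Finite) :
    Nonempty (s ≃o Set.Iio ((s.ncard : Ordinal.{0}))) := by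
  classical
  have hcard : hs.toFinset.card = s.ncard := (Set.ncard_eq_toFinset_card s hs).symm
  let e1 := hs.toFinset.orderIsoOfFin hcard
  let e2 : {x // x ∈ hs.toFinset} ≃o s :=
    { toEquiv := Equiv.subtypeEquivRight (fun x => hs.mem_toFinset)
      map_rel_iff' := Iff.rfl }
  let f : Fin s.ncard → ↥(Set.Iio ((s.ncard : Ordinal.{0}))) :=
    fun k => ⟨((k : ℕ) : Ordinal.{0}), Set.mem_Iio.2 (Nat.cast_lt.2 k.2)⟩
  have hmono : StrictMono f := fun k k' h => Subtype.mk_lt_mk.2 (Nat.cast_lt.2 h)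
  have hsurj : Function.Surjective f := by
    rintro ⟨j, hj⟩
    obtain ⟨k, rfl⟩ := Ordinal.lt_omega0.1 ((Set.mem_Iio.1 hj).trans (Ordinal.nat_lt_omega0 _))
    exact ⟨⟨k, Nat.cast_lt.1 (Set.mem_Iio.1 hj)⟩, rfl⟩
  let e3 := StrictMono.orderIsoOfSurjective f hmono hsurj
  exact ⟨((e1.trans e2).symm).trans e3⟩



lemma sizeN_iso {H : Set Ordinal.{0}} {n : ℕ} {a : Set Ordinal.{0}} (ha : a ∈ sizeN H n) :
    Nonempty (a ≃o Set.Iio ((n : Ordinal.{0}))) := by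
  have h := iso_of_finite ha.2.1
  rw [ha.2.2] at h
  exact h

lemma ncard_inter_lt {T : Set Ordinal.{0}} (hT : T.Finite) {x y : Ordinal.{0}}
    (hx : x ∈ T) (hxy : x < y) :
    (T ∩ Set.Iio x).ncard < (T ∩ Set.Iio y).ncard := by
  have hss : (T ∩ Set.Iio x) ⊂ (T ∩ Set.Iio y) := by
    rw [Set.ssubset_iff_of_subset (Set.inter_subset_inter_right T (Set.Iio_subset_Iio hxy.le))]
    exact ⟨x, ⟨hx, hxy⟩, fun h => absurd h.2 (lt_irrefl x)⟩
  exact Set.ncard_lt_ncard hss (hT.inter_of_left _)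

lemma eq_of_ncard_inter {T : Set Ordinal.{0}} (hT : T.Finite) {x y : Ordinal.{0}}
    (hx : x ∈ T) (hy : y ∈ T)
    (h : (T ∩ Set.Iio x).ncard = (T ∩ Set.Iio y).ncard) : x = y := by
  rcases lt_trichotomy x y with h' | h' | h'
  · exact absurd h (ne_of_lt (ncard_inter_lt hT hx h'))
  · exact h'
  · exact absurd h.symm (ne_of_lt (ncard_inter_lt hT hy h'))

lemma nth_image_inter {n : ℕ} {a m : Set Ordinal.{0}} (ea : a ≃o Set.Iio ((n : Ordinal.{0})))
    (hm : m ⊆ Set.Iio ((n : Ordinal.{0}))) {i : Ordinal.{0}} (hi : i ∈ m) :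
    (nth a '' m) ∩ Set.Iio (nth a i) = nth a '' (m ∩ Set.Iio i) := by
  ext γ
  constructor
  · rintro ⟨⟨i', hi', rfl⟩, hlt⟩
    have hlt' : i' < i := by
      by_contra hc
      push_neg at hc
      rcases eq_or_lt_of_le hc with rfl | h
      · exact absurd (Set.mem_Iio.1 hlt) (lt_irrefl _)
      · exact absurd (Set.mem_Iio.1 hlt)
          (not_lt.2 (le_of_lt (nth_lt_nth ea (hm hi) (hm hi') h)))
    exact ⟨i', ⟨hi', hlt'⟩, rfl⟩
  · rintro ⟨i', ⟨hi', hlt⟩, rfl⟩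
    exact ⟨⟨i', hi', rfl⟩, nth_lt_nth ea (hm hi') (hm hi) hlt⟩

lemma nth_eq_of_img_eq {n : ℕ} {a b m : Set Ordinal.{0}}
    (ea : a ≃o Set.Iio ((n : Ordinal.{0}))) (eb : b ≃o Set.Iio ((n : Ordinal.{0})))
    (hm : m ⊆ Set.Iio ((n : Ordinal.{0}))) (h : img a m = img b m)
    {i : Ordinal.{0}} (hi : i ∈ m) :
    nth a i = nth b i := by
  have hmfin : m.Finite := (iio_nat_finite n).subset hm
  have hTfin : (nth a '' m).Finite := hmfin.image _
  have hQa : ((nth a '' m) ∩ Set.Iio (nth a i)).ncard = (m ∩ Set.Iio i).ncard := by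
    rw [nth_image_inter ea hm hi]
    exact Set.ncard_image_of_injOn ((nth_injOn ea).mono (fun x hx => hm hx.1))
  have hQb : ((nth b '' m) ∩ Set.Iio (nth b i)).ncard = (m ∩ Set.Iio i).ncard := by
    rw [nth_image_inter eb hm hi]
    exact Set.ncard_image_of_injOn ((nth_injOn eb).mono (fun x hx => hm hx.1))
  have himg : nth a '' m = nth b '' m := h
  apply eq_of_ncard_inter hTfin ⟨i, hi, rfl⟩ (himg ▸ ⟨i, hi, rfl⟩)
  rw [hQa]
  rw [himg, hQb]

lemma step {H : Set Ordinal.{0}} {n : ℕ} {u : Set Ordinal.{0} → Set Ordinal.{0}}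
    {ρ : Ordinal.{0}} {r : Set Ordinal.{0} → Set Ordinal.{0}}
    (hu : IsUnifDeltaSysWith H n u ρ r) (hρ : ρ ≠ 0)
    {m : Set Ordinal.{0}} (hm : m ⊆ Set.Iio (n : Ordinal.{0}))
    {x : Set Ordinal.{0}} (hx : x ∈ sizeN H n)
    {i₀ : Ordinal.{0}} (hi₀ : i₀ < (n : Ordinal.{0})) (hi₀m : i₀ ∉ m)
    {β : Ordinal.{0}} (hβH : β ∈ H) (hβ : nth x i₀ < β)
    (hgt : ∀ j, i₀ < j → j < (n : Ordinal.{0}) → β < nth x j) :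
    ∃ c ∈ sizeN H n,
      (∀ j, j < (n : Ordinal.{0}) → j ≠ i₀ → nth c j = nth x j) ∧
      nth c i₀ = β ∧
      img (u x) (r m) = img (u c) (r m) := by
  obtain ⟨ex⟩ := sizeN_iso hx
  set f : Ordinal.{0} → Ordinal.{0} := fun j => if j = i₀ then β else nth x j with hf
  have hfmono : StrictMonoOn f (Set.Iio ((n : Ordinal.{0}))) := by
    intro j hj j' hj' hlt
    simp only [hf]
    rcases eq_or_ne j i₀ with rfl | hji
    · rw [if_pos rfl, if_neg (ne_of_gt hlt)]
      exact hgt j' hlt hj'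
    · rw [if_neg hji]
      rcases eq_or_ne j' i₀ with rfl | hji'
      · rw [if_pos rfl]
        exact lt_trans (nth_lt_nth ex hj hi₀ hlt) hβ
      · rw [if_neg hji']
        exact nth_lt_nth ex hj hj' hlt
  set c : Set Ordinal.{0} := f '' Set.Iio ((n : Ordinal.{0})) with hcdef
  have hnth_c : ∀ j, j < (n : Ordinal.{0}) → nth c j = f j :=
    fun j hj => nth_image_strictMonoOn hfmono hj
  have hnthc_i₀ : nth c i₀ = β := by rw [hnth_c i₀ hi₀]; simp [hf]
  have hnthc_ne : ∀ j, j < (n : Ordinal.{0}) → j ≠ i₀ → nth c j = nth x j := by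
    intro j hj hne
    rw [hnth_c j hj]
    simp [hf, hne]
  have hcH : c ⊆ H := by
    rintro _ ⟨j, hj, rfl⟩
    simp only [hf]
    split
    · exact hβH
    · exact hx.1 (nth_mem_of_iso ex hj)
  have hcfin : c.Finite := (iio_nat_finite n).image f
  have hccard : c.ncard = n := by
    rw [hcdef, Set.ncard_image_of_injOn hfmono.injOn, iio_nat_ncard]
  have hcmem : c ∈ sizeN H n := ⟨hcH, hcfin, hccard⟩
  obtain ⟨ec⟩ := sizeN_iso hcmem
  have hβx : β ∉ x := by
    intro hmem
    have h2 : β ∈ nth x '' Set.Iio ((n : Ordinal.{0})) := by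
      rw [← eq_nth_image ex]; exact hmem
    obtain ⟨j₀, hj₀, hj₀e⟩ := h2
    rcases lt_trichotomy j₀ i₀ with h | rfl | h
    · exact absurd hj₀e (ne_of_lt (lt_trans (nth_lt_nth ex hj₀ hi₀ h) hβ))
    · exact absurd hj₀e (ne_of_lt hβ)
    · exact absurd hj₀e (ne_of_gt (hgt j₀ h hj₀))
  have hxi₀c : nth x i₀ ∉ c := by
    rintro ⟨j, hj, hje⟩
    simp only [hf] at hje
    by_cases hji : j = i₀
    · rw [if_pos hji] at hje
      exact absurd hje (ne_of_gt hβ)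
    · rw [if_neg hji] at hje
      exact hji (nth_injOn ex hj hi₀ hje)
  have hotpx : otp x = (n : Ordinal.{0}) := otp_of_iso ex
  have hotpc : otp c = (n : Ordinal.{0}) := otp_of_iso ec
  have hx_inter_c : ∀ γ ∈ x, γ ∈ c → ∃ j, j < (n : Ordinal.{0}) ∧ j ≠ i₀ ∧
      γ = nth x j ∧ γ = nth c j := by
    intro γ hγx hγc
    obtain ⟨j, hj, rfl⟩ := hγc
    rcases eq_or_ne j i₀ with h | hne
    · exfalso
      apply hβx
      have hfj : f j = β := by simp only [hf]; rw [if_pos h]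
      rwa [hfj] at hγx
    · have h1 : f j = nth x j := by simp [hf, hne]
      exact ⟨j, hj, hne, h1, (hnth_c j hj).symm⟩
  have halign : Aligned x c := by
    refine ⟨hotpx.trans hotpc.symm, ?_⟩
    rintro γ ⟨hγx, hγc⟩
    obtain ⟨j, hj, _, hγ1, hγ2⟩ := hx_inter_c γ hγx hγc
    have h1 : otp (x ∩ Set.Iio γ) = j := by rw [hγ1]; exact otp_inter_nth ex hj
    have h2 : otp (c ∩ Set.Iio γ) = j := by rw [hγ2]; exact otp_inter_nth ec hj
    rw [h1, h2]
  have hidx : idx x c = Set.Iio ((n : Ordinal.{0})) \ {i₀} := by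
    ext i
    simp only [idx, Set.mem_setOf_eq, hotpx, Set.mem_diff, Set.mem_Iio, Set.mem_singleton_iff]
    constructor
    · rintro ⟨hi, hic⟩
      refine ⟨hi, ?_⟩
      rintro rfl
      exact hxi₀c hic
    · rintro ⟨hi, hne⟩
      refine ⟨hi, ?_⟩
      rw [← hnthc_ne i hi hne]
      exact nth_mem_of_iso ec hi
  set mb : Set Ordinal.{0} := Set.Iio ((n : Ordinal.{0})) \ {i₀} with hmb
  have hmbsub : mb ⊆ Set.Iio ((n : Ordinal.{0})) := Set.diff_subset
  obtain ⟨hAl, hIdx⟩ := hu.2.2.1 mb hmbsub x hx c hcmem halign hidx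
  have hrsub : r m ⊆ r mb := by
    have hcap : m ∩ mb = m := by
      apply Set.inter_eq_self_of_subset_left
      intro i hi
      exact ⟨hm hi, fun he => hi₀m (Set.mem_singleton_iff.1 he ▸ hi)⟩
    have h4 := hu.2.2.2 m hm mb hmbsub
    rw [hcap] at h4
    rw [h4]
    exact Set.inter_subset_right
  have hux : otp (u x) = ρ := hu.2.1 x hx
  have huc : otp (u c) = ρ := hu.2.1 c hcmem
  have hiux := iso_of_otp_ne_zero (s := u x) (by rw [hux]; exact hρ)
  rw [hux] at hiux
  obtain ⟨eux⟩ := hiux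
  have hiuc := iso_of_otp_ne_zero (s := u c) (by rw [huc]; exact hρ)
  rw [huc] at hiuc
  obtain ⟨euc⟩ := hiuc
  have hpt : ∀ j ∈ r m, nth (u x) j = nth (u c) j := by
    intro j hj
    have hjidx : j ∈ idx (u x) (u c) := by rw [hIdx]; exact hrsub hj
    obtain ⟨hjlt, hjmem⟩ := hjidx
    have hjρ : j < ρ := by rwa [hux] at hjlt
    have h1 : otp (u x ∩ Set.Iio (nth (u x) j)) = j := otp_inter_nth eux hjρ
    have h2 : otp (u c ∩ Set.Iio (nth (u x) j)) = j := by
      rw [← hAl.2 (nth (u x) j) ⟨nth_mem_of_iso eux hjρ, hjmem⟩]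
      exact h1
    have h3 : (euc ⟨nth (u x) j, hjmem⟩ : Ordinal.{0}) = j := by
      rw [← otp_inter_Iio euc hjmem]
      exact h2
    have h4 : euc ⟨nth (u x) j, hjmem⟩ = ⟨j, hjρ⟩ := Subtype.ext h3
    have h5 : euc.symm ⟨j, hjρ⟩ = ⟨nth (u x) j, hjmem⟩ := by
      rw [← h4, euc.symm_apply_apply]
    rw [nth_of_iso euc hjρ, h5]
  exact ⟨c, hcmem, hnthc_ne, hnthc_i₀, Set.image_congr hpt⟩

end Stmt1Aux

/-- Proposition 2.8(1): if `⟨u_b : b ∈ [H]^n⟩` is a uniform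
`n`-dimensional Δ-system witnessed by `ρ` and `⟨r_m : m ⊆ n⟩`, then for all `m ⊆ n`
and `a, b ∈ [H]^n` with `a[m] = b[m]`, we have `u_a[r_m] = u_b[r_m]`. -/
theorem stmt1 (n : ℕ) (hn : 1 ≤ n) (H : Set Ordinal.{0})
    (u : Set Ordinal.{0} → Set Ordinal.{0})
    (ρ : Ordinal.{0}) (r : Set Ordinal.{0} → Set Ordinal.{0})
    (hu : IsUnifDeltaSysWith H n u ρ r) :
    ∀ m ⊆ Set.Iio (n : Ordinal.{0}), ∀ a ∈ sizeN H n, ∀ b ∈ sizeN H n,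
      img a m = img b m → img (u a) (r m) = img (u b) (r m) := by
  intro m hm a ha b hb himg
  rcases eq_or_ne ρ 0 with rfl | hρ
  · have hrm : r m = ∅ := by
      apply Set.subset_empty_iff.1
      intro i hi
      exact absurd (Set.mem_Iio.1 (hu.1 m hm hi)) (not_lt_of_ge (zero_le (a := i)))
    rw [img, img, hrm, Set.image_empty, Set.image_empty]
  · -- base case helper
    have base : ∀ a' ∈ sizeN H n, ∀ b' ∈ sizeN H n,
        {i : Ordinal.{0} | i < (n : Ordinal.{0}) ∧ nth a' i ≠ nth b' i} = ∅ →
        img (u a') (r m) = img (u b') (r m) := by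
      intro a' ha' b' hb' hS
      have hpt : ∀ i ∈ Set.Iio ((n : Ordinal.{0})), nth a' i = nth b' i := by
        intro i hi
        by_contra hne
        have hmem : i ∈ {i : Ordinal.{0} | i < (n : Ordinal.{0}) ∧ nth a' i ≠ nth b' i} :=
          ⟨Set.mem_Iio.1 hi, hne⟩
        rw [hS] at hmem
        exact hmem
      obtain ⟨ea⟩ := Stmt1Aux.sizeN_iso ha'
      obtain ⟨eb⟩ := Stmt1Aux.sizeN_iso hb'
      have hab : a' = b' := by
        rw [Stmt1Aux.eq_nth_image ea, Stmt1Aux.eq_nth_image eb]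
        exact Set.image_congr hpt
      rw [hab]
    have key : ∀ k : ℕ, ∀ a' ∈ sizeN H n, ∀ b' ∈ sizeN H n,
        img a' m = img b' m →
        {i : Ordinal.{0} | i < (n : Ordinal.{0}) ∧ nth a' i ≠ nth b' i}.ncard ≤ k →
        img (u a') (r m) = img (u b') (r m) := by
      intro k
      induction k with
      | zero =>
        intro a' ha' b' hb' himg' hcard
        have hSfin : {i : Ordinal.{0} | i < (n : Ordinal.{0}) ∧ nth a' i ≠ nth b' i}.Finite :=
          (Stmt1Aux.iio_nat_finite n).subset (fun i hi => hi.1)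
        exact base a' ha' b' hb'
          ((Set.ncard_eq_zero hSfin).1 (Nat.le_zero.1 hcard))
      | succ k ih =>
        intro a' ha' b' hb' himg' hcard
        set S : Set Ordinal.{0} :=
          {i : Ordinal.{0} | i < (n : Ordinal.{0}) ∧ nth a' i ≠ nth b' i} with hSdef
        have hSfin : S.Finite := (Stmt1Aux.iio_nat_finite n).subset (fun i hi => hi.1)
        rcases eq_or_ne S ∅ with hSemp | hSne
        · exact base a' ha' b' hb' hSemp
        · obtain ⟨i₀, hi₀S, hi₀max⟩ :=
            Set.Finite.exists_maximalFor id S hSfin (Set.nonempty_iff_ne_empty.2 hSne)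
          obtain ⟨ea⟩ := Stmt1Aux.sizeN_iso ha'
          obtain ⟨eb⟩ := Stmt1Aux.sizeN_iso hb'
          have hi₀lt : i₀ < (n : Ordinal.{0}) := hi₀S.1
          have hnei₀ : nth a' i₀ ≠ nth b' i₀ := hi₀S.2
          have hagree : ∀ j, i₀ < j → j < (n : Ordinal.{0}) → nth a' j = nth b' j := by
            intro j h1 h2
            by_contra hne'
            exact absurd (hi₀max ⟨h2, hne'⟩ (le_of_lt h1)) (not_le.2 h1)
          have hi₀m : i₀ ∉ m := fun hmem =>
            hnei₀ (Stmt1Aux.nth_eq_of_img_eq ea eb hm himg' hmem)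
          -- measure bound helper
          have hmeas : ∀ S' : Set Ordinal.{0}, S' ⊆ S \ {i₀} → S'.ncard ≤ k := by
            intro S' hsub
            have h1 : S'.ncard ≤ (S \ {i₀}).ncard :=
              Set.ncard_le_ncard hsub (hSfin.diff (t := {i₀}))
            have h2 : (S \ {i₀}).ncard < S.ncard :=
              Set.ncard_diff_singleton_lt_of_mem hi₀S hSfin
            omega
          rcases lt_or_gt_of_ne hnei₀ with hlt | hgt
          · have hgt' : ∀ j, i₀ < j → j < (n : Ordinal.{0}) → nth b' i₀ < nth a' j := by
              intro j h1 h2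
              rw [hagree j h1 h2]
              exact Stmt1Aux.nth_lt_nth eb hi₀lt h2 h1
            have hβH : nth b' i₀ ∈ H := hb'.1 (Stmt1Aux.nth_mem_of_iso eb hi₀lt)
            obtain ⟨c, hc, hcne, hci₀, hux⟩ :=
              Stmt1Aux.step hu hρ hm ha' hi₀lt hi₀m hβH hlt hgt'
            have hcm : img c m = img a' m :=
              Set.image_congr fun i hi => hcne i (hm hi)
                (fun he => hi₀m (he ▸ hi))
            have hsub2 : {i : Ordinal.{0} | i < (n : Ordinal.{0}) ∧ nth c i ≠ nth b' i}
                ⊆ S \ {i₀} := by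
              rintro i ⟨h1, h2⟩
              rcases eq_or_ne i i₀ with rfl | hne2
              · rw [hci₀] at h2
                exact absurd rfl h2
              · exact ⟨⟨h1, fun he => h2 ((hcne i h1 hne2).trans he)⟩, hne2⟩
            exact hux.trans (ih c hc b' hb' (hcm.trans himg') (hmeas _ hsub2))
          · have hgt' : ∀ j, i₀ < j → j < (n : Ordinal.{0}) → nth a' i₀ < nth b' j := by
              intro j h1 h2
              rw [← hagree j h1 h2]
              exact Stmt1Aux.nth_lt_nth ea hi₀lt h2 h1
            have hβH : nth a' i₀ ∈ H := ha'.1 (Stmt1Aux.nth_mem_of_iso ea hi₀lt)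
            obtain ⟨c, hc, hcne, hci₀, hux⟩ :=
              Stmt1Aux.step hu hρ hm hb' hi₀lt hi₀m hβH hgt hgt'
            have hcm : img c m = img b' m :=
              Set.image_congr fun i hi => hcne i (hm hi)
                (fun he => hi₀m (he ▸ hi))
            have hsub2 : {i : Ordinal.{0} | i < (n : Ordinal.{0}) ∧ nth a' i ≠ nth c i}
                ⊆ S \ {i₀} := by
              rintro i ⟨h1, h2⟩
              rcases eq_or_ne i i₀ with rfl | hne2
              · rw [hci₀] at h2
                exact absurd rfl h2
              · exact ⟨⟨h1, fun he => h2 (he.trans (hcne i h1 hne2).symm)⟩, hne2⟩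
            exact (ih a' ha' c hc (himg'.trans hcm.symm) (hmeas _ hsub2)).trans hux.symm
    exact key _ a ha b hb himg le_rfl

end
end

section
/- Suppose that λ is a regular uncountable cardinal that is not weakly compact (i.e., λ ↛ (λ)^2_2, so there is c : [λ]^2 → 2 that is not constant on [H]^2 for any H ∈ [λ]^λ). Then there exists a family ⟨u_b : b ∈ [λ]^2⟩ of finite sets of ordinals that is a 2-dimensional Δ-system, yet there is no H ∈ [λ]^λ for which ⟨u_b : b ∈ [H]^2⟩ is a uniform 2-dimensional Δ-system. -/
open Cardinal Set

noncomputable section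

lemma ord_one_lt_two : (1 : Ordinal.{0}) < 2 := by
  rw [← one_add_one_eq_two, Ordinal.add_one_eq_succ]; exact Order.lt_succ _

lemma ord_zero_lt_two : (0 : Ordinal.{0}) < 2 := zero_lt_one.trans ord_one_lt_two

lemma ord_lt_add_one (o : Ordinal.{0}) : o < o + 1 := by
  rw [Ordinal.add_one_eq_succ]; exact Order.lt_succ _

lemma ordLtTwo {o : Ordinal.{0}} (h : o < 2) : o = 0 ∨ o = 1 := by
  rw [← one_add_one_eq_two, Ordinal.add_one_eq_succ, Order.lt_succ_iff] at h
  rcases lt_or_eq_of_le h with h | h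
  · exact Or.inl (Ordinal.lt_one_iff_zero.mp h)
  · exact Or.inr h

lemma otp_empty : otp (∅ : Set Ordinal.{0}) = 0 := by
  have h0 : (0:Ordinal) ∈ {o : Ordinal | Nonempty ((∅ : Set Ordinal.{0}) ≃o Set.Iio o)} := by
    haveI : IsEmpty (↥(Set.Iio (0:Ordinal))) := ⟨fun x => (zero_le (a := x.1)).not_gt x.2⟩
    exact ⟨⟨Equiv.equivOfIsEmpty _ _, fun {a} => isEmptyElim a⟩⟩
  exact le_antisymm (csInf_le' h0) zero_le

lemma otp_singleton (α : Ordinal.{0}) : otp {α} = 1 := by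
  have h1 : (1:Ordinal) ∈ {o : Ordinal | Nonempty (({α} : Set Ordinal.{0}) ≃o Set.Iio o)} := by
    refine ⟨⟨⟨fun _ => ⟨0, Set.mem_Iio.mpr zero_lt_one⟩, fun _ => ⟨α, rfl⟩, ?_, ?_⟩, ?_⟩⟩
    · rintro ⟨x, hx⟩
      simp only [Set.mem_singleton_iff] at hx
      simp [hx]
    · rintro ⟨y, hy⟩
      have : y = 0 := Ordinal.lt_one_iff_zero.mp hy
      simp [this]
    · rintro ⟨a, ha⟩ ⟨b, hb⟩
      simp only [Set.mem_singleton_iff] at ha hb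
      subst ha; subst hb
      simp
  have hmem := csInf_mem (⟨1, h1⟩ :
    Set.Nonempty {o : Ordinal | Nonempty (({α} : Set Ordinal.{0}) ≃o Set.Iio o)})
  have hle : otp {α} ≤ 1 := csInf_le' h1
  rcases lt_or_eq_of_le hle with h | h
  · exfalso
    have h0 : otp {α} = 0 := Ordinal.lt_one_iff_zero.mp h
    rw [show sInf {o : Ordinal | Nonempty (({α} : Set Ordinal.{0}) ≃o Set.Iio o)} = otp {α} from rfl,
      h0] at hmem
    obtain ⟨e⟩ := hmem
    exact (zero_le (a := ((e ⟨α, rfl⟩ : Set.Iio (0:Ordinal)) : Ordinal))).not_gt (e ⟨α, rfl⟩).2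
  · exact h

noncomputable def pairIso {α β : Ordinal.{0}} (h : α < β) :
    ({α, β} : Set Ordinal.{0}) ≃o Set.Iio (2 : Ordinal.{0}) := by
  classical
  refine ⟨⟨fun x => if (x:Ordinal) = α then ⟨0, Set.mem_Iio.mpr ord_zero_lt_two⟩ else ⟨1, Set.mem_Iio.mpr ord_one_lt_two⟩,
    fun y => if (y:Ordinal) = 0 then ⟨α, Set.mem_insert _ _⟩
      else ⟨β, Set.mem_insert_of_mem _ rfl⟩, ?_, ?_⟩, ?_⟩
  · rintro ⟨x, hx⟩
    rcases hx with rfl | hx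
    · simp
    · rw [Set.mem_singleton_iff] at hx
      subst hx
      simp [h.ne', one_ne_zero]
  · rintro ⟨y, hy⟩
    rcases ordLtTwo hy with rfl | rfl
    · simp
    · simp [h.ne', one_ne_zero]
  · rintro ⟨a, ha⟩ ⟨b, hb⟩
    have hcase : ∀ x, x ∈ ({α, β} : Set Ordinal.{0}) → x = α ∨ x = β := by
      rintro x (rfl | hx)
      · exact Or.inl rfl
      · exact Or.inr hx
    rcases hcase a ha with rfl | rfl <;> rcases hcase b hb with rfl | rfl <;>
      simp [h.ne', h.le, h.not_ge, Subtype.mk_le_mk, zero_le_one,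
        (not_le.mpr zero_lt_one : ¬ (1:Ordinal) ≤ 0)]

lemma otp_pair {α β : Ordinal.{0}} (h : α < β) : otp {α, β} = 2 := by
  have h2 : (2:Ordinal) ∈ {o : Ordinal | Nonempty (({α, β} : Set Ordinal.{0}) ≃o Set.Iio o)} :=
    ⟨pairIso h⟩
  have hmem := csInf_mem (⟨2, h2⟩ :
    Set.Nonempty {o : Ordinal | Nonempty (({α, β} : Set Ordinal.{0}) ≃o Set.Iio o)})
  have hle : otp {α, β} ≤ 2 := csInf_le' h2
  have heq : sInf {o : Ordinal | Nonempty (({α, β} : Set Ordinal.{0}) ≃o Set.Iio o)}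
      = otp {α, β} := rfl
  rw [heq] at hmem
  rcases lt_or_eq_of_le hle with hlt | hfin
  · exfalso
    rcases ordLtTwo hlt with h0 | h1
    · rw [h0] at hmem
      obtain ⟨e⟩ := hmem
      exact (zero_le (a := ((e ⟨α, Set.mem_insert _ _⟩ : Set.Iio (0:Ordinal)) : Ordinal))).not_gt (e ⟨α, Set.mem_insert _ _⟩).2
    · rw [h1] at hmem
      obtain ⟨e⟩ := hmem
      have hα := (e ⟨α, Set.mem_insert _ _⟩).2
      have hβ := (e ⟨β, Set.mem_insert_of_mem _ rfl⟩).2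
      have : e ⟨α, Set.mem_insert _ _⟩ = e ⟨β, Set.mem_insert_of_mem _ rfl⟩ :=
        Subtype.ext ((Ordinal.lt_one_iff_zero.mp hα).trans
          (Ordinal.lt_one_iff_zero.mp hβ).symm)
      exact h.ne (congrArg Subtype.val (e.injective this))
  · exact hfin

lemma pair_inter_Iio_left {α β : Ordinal.{0}} (h : α < β) :
    ({α, β} : Set Ordinal.{0}) ∩ Set.Iio α = ∅ := by
  ext x
  simp only [Set.mem_inter_iff, Set.mem_insert_iff, Set.mem_singleton_iff, Set.mem_Iio,
    Set.mem_empty_iff_false, iff_false, not_and]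
  rintro (rfl | rfl)
  · exact lt_irrefl _
  · exact fun h' => absurd h' (not_lt.2 h.le)

lemma pair_inter_Iio_right {α β : Ordinal.{0}} (h : α < β) :
    ({α, β} : Set Ordinal.{0}) ∩ Set.Iio β = {α} := by
  ext x
  simp only [Set.mem_inter_iff, Set.mem_insert_iff, Set.mem_singleton_iff, Set.mem_Iio]
  constructor
  · rintro ⟨rfl | rfl, hx⟩
    · rfl
    · exact absurd hx (lt_irrefl _)
  · rintro rfl
    exact ⟨Or.inl rfl, h⟩

lemma nth_pair_zero {α β : Ordinal.{0}} (h : α < β) : nth {α, β} 0 = α := by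
  have hset : {x | x ∈ ({α, β} : Set Ordinal.{0}) ∧ otp ({α, β} ∩ Set.Iio x) = 0} = {α} := by
    ext x
    simp only [Set.mem_setOf_eq, Set.mem_insert_iff, Set.mem_singleton_iff]
    constructor
    · rintro ⟨rfl | rfl, hx⟩
      · rfl
      · rw [pair_inter_Iio_right h, otp_singleton] at hx
        exact absurd hx one_ne_zero
    · rintro rfl
      refine ⟨Or.inl rfl, ?_⟩
      rw [pair_inter_Iio_left h, otp_empty]
  rw [nth, hset, csInf_singleton]

lemma nth_pair_one {α β : Ordinal.{0}} (h : α < β) : nth {α, β} 1 = β := by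
  have hset : {x | x ∈ ({α, β} : Set Ordinal.{0}) ∧ otp ({α, β} ∩ Set.Iio x) = 1} = {β} := by
    ext x
    simp only [Set.mem_setOf_eq, Set.mem_insert_iff, Set.mem_singleton_iff]
    constructor
    · rintro ⟨rfl | rfl, hx⟩
      · rw [pair_inter_Iio_left h, otp_empty] at hx
        exact absurd hx.symm one_ne_zero
      · rfl
    · rintro rfl
      refine ⟨Or.inr rfl, ?_⟩
      rw [pair_inter_Iio_right h, otp_singleton]
  rw [nth, hset, csInf_singleton]

lemma mulAddInj {γ q r q' r' : Ordinal.{0}} (hγ : γ ≠ 0) (hr : r < γ) (hr' : r' < γ)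
    (h : γ * q + r = γ * q' + r') : q = q' ∧ r = r' := by
  have hq : q = q' := by
    have h2 := congrArg (· / γ) h
    simpa [Ordinal.mul_add_div _ hγ, Ordinal.div_eq_zero_of_lt hr,
      Ordinal.div_eq_zero_of_lt hr'] using h2
  subst hq
  exact ⟨rfl, (add_right_inj _).mp h⟩

/-- Remark 2.9: if `λ` is regular, uncountable, and not weakly compact
(`λ ↛ (λ)²₂`), then there is a 2-dimensional Δ-system `⟨u_b : b ∈ [λ]²⟩` of finite
sets of ordinals such that no `H ∈ [λ]^λ` makes `⟨u_b : b ∈ [H]²⟩` a *uniform*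
2-dimensional Δ-system. -/
theorem stmt3 (lam : Cardinal.{0}) (hreg : lam.IsRegular) (hunc : ℵ₀ < lam)
    (hnwc : ¬ PartitionRel lam lam 2 2) :
    ∃ u : Set Ordinal.{0} → Set Ordinal.{0},
      (∀ b ∈ sizeN (Set.Iio lam.ord) 2, (u b).Finite) ∧
      IsDeltaSys (Set.Iio lam.ord) 2 u ∧
      ∀ H ∈ sizeC (Set.Iio lam.ord) lam, ¬ IsUnifDeltaSys H 2 u := by
  classical
  rw [PartitionRel] at hnwc
  push_neg at hnwc
  obtain ⟨c, hcbd, hcnc⟩ := hnwc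
  set Λ := lam.ord with hΛdef
  have h1Λ : (1 : Ordinal) < Λ := by
    rw [hΛdef, Cardinal.lt_ord, Ordinal.card_one]
    exact one_lt_aleph0.trans hunc
  have hΛ0 : Λ ≠ 0 := (zero_lt_one.trans h1Λ).ne'
  have h0Λ : (0 : Ordinal) < Λ := zero_lt_one.trans h1Λ
  let E : Set Ordinal.{0} → Ordinal.{0} := fun b => Λ * (Λ * sSup b + sInf b)
  let u : Set Ordinal.{0} → Set Ordinal.{0} :=
    fun b => {E b} ∪ {x | c b = 1 ∧ x = E b + 1}
  have hu0 : ∀ b, c b ≠ 1 → u b = {E b} := by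
    intro b hb
    ext x
    simp [u, hb]
  have hu1 : ∀ b, c b = 1 → u b = {E b, E b + 1} := by
    intro b hb
    ext x
    simp [u, hb, or_comm]
  have hrep : ∀ b ∈ sizeN (Set.Iio Λ) 2,
      ∃ α β : Ordinal, α < β ∧ α < Λ ∧ β < Λ ∧ b = {α, β} := by
    intro b hb
    obtain ⟨x, y, hxy, rfl⟩ := Set.ncard_eq_two.mp hb.2.2
    rcases hxy.lt_or_gt with h | h
    · exact ⟨x, y, h, hb.1 (Set.mem_insert _ _), hb.1 (Set.mem_insert_of_mem _ rfl), rfl⟩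
    · exact ⟨y, x, h, hb.1 (Set.mem_insert_of_mem _ rfl), hb.1 (Set.mem_insert _ _),
        Set.pair_comm x y⟩
  have hE : ∀ α β : Ordinal, α < β → E {α, β} = Λ * (Λ * β + α) := by
    intro α β h
    show Λ * (Λ * sSup {α, β} + sInf {α, β}) = _
    rw [csSup_pair, csInf_pair, sup_eq_right.mpr h.le, inf_eq_left.mpr h.le]
  have hdisj : ∀ b ∈ sizeN (Set.Iio Λ) 2, ∀ b' ∈ sizeN (Set.Iio Λ) 2, b ≠ b' →
      u b ∩ u b' = ∅ := by
    intro b hb b' hb' hne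
    obtain ⟨α, β, hab, hαΛ, hβΛ, rfl⟩ := hrep b hb
    obtain ⟨α', β', hab', hαΛ', hβΛ', rfl⟩ := hrep b' hb'
    ext x
    simp only [Set.mem_inter_iff, Set.mem_empty_iff_false, iff_false, not_and]
    intro hx1 hx2
    have key : ∀ s : Set Ordinal.{0}, x ∈ u s → ∃ i, i < Λ ∧ x = E s + i := by
      intro s hs
      rcases hs with hs | hs
      · exact ⟨0, h0Λ, by rw [add_zero]; exact hs⟩
      · exact ⟨1, h1Λ, hs.2⟩
    obtain ⟨i, hiΛ, hxi⟩ := key _ hx1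
    obtain ⟨j, hjΛ, hxj⟩ := key _ hx2
    rw [hE α β hab] at hxi
    rw [hE α' β' hab'] at hxj
    have h1 := mulAddInj hΛ0 hiΛ hjΛ (hxi.symm.trans hxj)
    have h2 := mulAddInj hΛ0 hαΛ hαΛ' h1.1
    apply hne
    rw [h2.1, h2.2]
  refine ⟨u, ?_, ?_, ?_⟩
  · intro b hb
    by_cases h : c b = 1
    · rw [hu1 b h]
      exact (Set.finite_singleton _).insert _
    · rw [hu0 b h]
      exact Set.finite_singleton _
  · refine ⟨fun m s => if Set.Iio (2:Ordinal) ⊆ m then u s else ∅, ?_⟩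
    intro m hm b hb b' hb' halign hidx
    by_cases hbb : b = b'
    · subst hbb
      have hmm : Set.Iio (2:Ordinal) ⊆ m := by
        intro i hi
        rw [← hidx]
        obtain ⟨α, β, hab, _, _, hbeq⟩ := hrep b hb
        refine ⟨by rw [hbeq, otp_pair hab]; exact hi, ?_⟩
        rcases ordLtTwo hi with rfl | rfl
        · rw [hbeq, nth_pair_zero hab]
          exact Set.mem_insert _ _
        · rw [hbeq, nth_pair_one hab]
          exact Set.mem_insert_of_mem _ rfl
      beta_reduce
      rw [if_pos hmm, Set.inter_self, Set.inter_self]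
    · have hmm : ¬ Set.Iio (2:Ordinal) ⊆ m := by
        intro hsub
        apply hbb
        obtain ⟨α, β, hab, _, _, hbeq⟩ := hrep b hb
        have h0 : (0:Ordinal) ∈ m := hsub (Set.mem_Iio.mpr ord_zero_lt_two)
        have h1 : (1:Ordinal) ∈ m := hsub (Set.mem_Iio.mpr ord_one_lt_two)
        rw [← hidx] at h0 h1
        have hα : α ∈ b' := by
          have := h0.2
          rwa [hbeq, nth_pair_zero hab] at this
        have hβ : β ∈ b' := by
          have := h1.2
          rwa [hbeq, nth_pair_one hab] at this
        have hsub2 : b ⊆ b' := by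
          rw [hbeq]
          rintro x (rfl | hx)
          · exact hα
          · rw [Set.mem_singleton_iff] at hx
            rw [hx]
            exact hβ
        exact Set.eq_of_subset_of_ncard_le hsub2 (by rw [hb'.2.2, hb.2.2]) hb'.2.1
      beta_reduce
      rw [if_neg hmm]
      exact hdisj b hb b' hb' hbb
  · rintro H hH ⟨ρ, r, -, hconst, -, -⟩
    have hsub : sizeN H 2 ⊆ sizeN (Set.Iio Λ) 2 := fun b hb => ⟨hb.1.trans hH.1, hb.2⟩
    obtain ⟨b₀, hb₀, hb₀c⟩ := hcnc H hH 0
    obtain ⟨b₁, hb₁, hb₁c⟩ := hcnc H hH 1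
    have hc₀ : c b₀ = 1 := by
      have hlt := hcbd b₀ (hsub hb₀)
      rw [Cardinal.ord_ofNat] at hlt
      rcases ordLtTwo hlt with h | h
      · exact absurd h hb₀c
      · exact h
    have e0 := hconst b₀ hb₀
    have e1 := hconst b₁ hb₁
    rw [hu1 b₀ hc₀, otp_pair (ord_lt_add_one _)] at e0
    rw [hu0 b₁ hb₁c, otp_singleton] at e1
    exact absurd (e1.trans e0.symm) (ne_of_lt ord_one_lt_two)


end
end

section
/- Suppose that 1 ≤ n < ω and κ is an infinite cardinal such that Θ_n > κ, i.e., there is a function g : κ^n → ω that is not constant on any product ∏_{i<n} A_i of n infinite subsets A_i ⊆ κ. Then Θ_{n+1} > κ⁺, i.e., there is a function f : (κ⁺)^{n+1} → ω (with values coded in ω) that is not constant on any product ∏_{i<n+1} A_i of (n+1) infinite subsets A_i ⊆ κ⁺. -/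
open Cardinal Set

/-- `f` is constant on no product of `n` infinite subsets of (the ordinals below) `θ`. -/
def NotConstOnProducts (θ : Cardinal.{0}) (n : ℕ) (f : (Fin n → Ordinal.{0}) → ℕ) : Prop :=
  ∀ A : Fin n → Set Ordinal.{0},
    (∀ i, A i ⊆ Set.Iio θ.ord) → (∀ i, (A i).Infinite) →
    ¬ ∃ k, ∀ x : Fin n → Ordinal.{0}, (∀ i, x i ∈ A i) → f x = k

/-- Proposition 5.3: if `1 ≤ n < ω`, `κ` is an infinite cardinal, and
`Θ_n > κ` (witnessed by `g : κ^n → ω` not constant on any product of `n` infinite subsets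
of `κ`), then `Θ_{n+1} > κ⁺` (witnessed by some `f : (κ⁺)^{n+1} → ω` not constant on any
product of `n+1` infinite subsets of `κ⁺`). -/
theorem stmt13 (n : ℕ) (hn : 1 ≤ n) (κ : Cardinal.{0}) (hk : ℵ₀ ≤ κ)
    (g : (Fin n → Ordinal.{0}) → ℕ) (hg : NotConstOnProducts κ n g) :
    ∃ f : (Fin (n + 1) → Ordinal.{0}) → ℕ, NotConstOnProducts (Order.succ κ) (n + 1) f := by
  classical
  set κ' := Order.succ κ with hκ'
  -- For every `α < (κ⁺).ord` there is an injection from `Iio α` into `Iio κ.ord`.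
  have hE : ∀ α : Ordinal.{0}, α < κ'.ord → Nonempty (Set.Iio α ↪ Set.Iio κ.ord) := by
    intro α hα
    rw [← Cardinal.le_def, Ordinal.mk_Iio_ordinal, Ordinal.mk_Iio_ordinal, Cardinal.card_ord]
    exact Cardinal.lift_le.2 (Order.lt_succ_iff.mp (Cardinal.lt_ord.mp hα))
  let e : ∀ α : Ordinal.{0}, α < κ'.ord → (Set.Iio α ↪ Set.Iio κ.ord) :=
    fun α h => (hE α h).some
  let E : Ordinal.{0} → Ordinal.{0} → Ordinal.{0} := fun α β =>
    if h : α < κ'.ord ∧ β < α then (e α h.1 ⟨β, h.2⟩ : Ordinal) else 0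
  have hElt : ∀ (α β : Ordinal.{0}), α < κ'.ord → β < α → E α β ∈ Set.Iio κ.ord := by
    intro α β h1 h2
    show (if h : α < κ'.ord ∧ β < α then (e α h.1 ⟨β, h.2⟩ : Ordinal) else 0) ∈ _
    rw [dif_pos ⟨h1, h2⟩]
    exact (e α h1 ⟨β, h2⟩).2
  have hEinj : ∀ (α : Ordinal.{0}), α < κ'.ord → Set.InjOn (E α) (Set.Iio α) := by
    intro α h β1 h1 β2 h2 heq
    have heq' : (e α h ⟨β1, h1⟩ : Ordinal) = (e α h ⟨β2, h2⟩ : Ordinal) := by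
      have e1 : E α β1 = (e α h ⟨β1, h1⟩ : Ordinal) := dif_pos ⟨h, h1⟩
      have e2 : E α β2 = (e α h ⟨β2, h2⟩ : Ordinal) := dif_pos ⟨h, h2⟩
      rw [← e1, ← e2]; exact heq
    have := (e α h).injective (Subtype.coe_injective heq')
    exact congrArg Subtype.val this
  -- The coloring: look at the unique maximal coordinate (if it exists).
  let f : (Fin (n + 1) → Ordinal.{0}) → ℕ := fun x =>
    if h : ∃ j : Fin (n + 1), ∀ i, i ≠ j → x i < x j
    then Nat.pair h.choose.val (g fun i => E (x h.choose) (x (h.choose.succAbove i)))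
    else 0
  have L1 : ∀ (x : Fin (n + 1) → Ordinal.{0}) (j : Fin (n + 1)),
      (∀ i, i ≠ j → x i < x j) →
      f x = Nat.pair j.val (g fun i => E (x j) (x (j.succAbove i))) := by
    intro x j hj
    have hex : ∃ j : Fin (n + 1), ∀ i, i ≠ j → x i < x j := ⟨j, hj⟩
    have hchoose : hex.choose = j := by
      by_contra hne
      exact lt_asymm (hj _ hne) (hex.choose_spec j (Ne.symm hne))
    show (if h : ∃ j : Fin (n + 1), ∀ i, i ≠ j → x i < x j
        then Nat.pair h.choose.val (g fun i => E (x h.choose) (x (h.choose.succAbove i)))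
        else 0) = _
    rw [dif_pos hex, hchoose]
  refine ⟨f, ?_⟩
  intro A hA hAinf
  rintro ⟨k, hk2⟩
  -- `σ i` is the least ordinal below which `A i` has infinitely many elements.
  set σ : Fin (n + 1) → Ordinal.{0} := fun i => sInf {β | (A i ∩ Set.Iio β).Infinite} with hσd
  have hne : ∀ i, {β | (A i ∩ Set.Iio β).Infinite}.Nonempty := by
    intro i
    refine ⟨κ'.ord, ?_⟩
    show (A i ∩ Set.Iio κ'.ord).Infinite
    rw [Set.inter_eq_self_of_subset_left (hA i)]
    exact hAinf i
  have hσmem : ∀ i, (A i ∩ Set.Iio (σ i)).Infinite := fun i => csInf_mem (hne i)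
  have hle : ∀ i β, (A i ∩ Set.Iio β).Infinite → σ i ≤ β :=
    fun i β h => csInf_le (OrderBot.bddBelow _) h
  have hfin : ∀ i β, β < σ i → (A i ∩ Set.Iio β).Finite := by
    intro i β h
    exact Set.not_infinite.mp fun hi => (hle i β hi).not_gt h
  by_cases hgood : ∃ j, ∃ α ∈ A j, ∀ i, i ≠ j → (A i ∩ Set.Iio α).Infinite
  · -- Good case: decode through `E α` and contradict `hg`.
    obtain ⟨j, α, hαA, hinf⟩ := hgood
    have hα' : α < κ'.ord := hA j hαA
    refine hg (fun i => E α '' (A (j.succAbove i) ∩ Set.Iio α)) ?_ ?_ ⟨(Nat.unpair k).2, ?_⟩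
    · rintro i _ ⟨β, ⟨_, hβ⟩, rfl⟩
      exact hElt α β hα' hβ
    · intro i
      exact Set.Infinite.image ((hEinj α hα').mono Set.inter_subset_right)
        (hinf _ (Fin.succAbove_ne j i))
    · intro z hz
      choose y hy hyE using fun i => hz i
      set x : Fin (n + 1) → Ordinal.{0} := Fin.insertNth j α y with hxd
      have hxj : x j = α := by
        rw [hxd]; exact Fin.insertNth_apply_same (α := fun _ => Ordinal.{0}) j α y
      have hxs : ∀ i, x (j.succAbove i) = y i := by
        intro i; rw [hxd]; exact Fin.insertNth_apply_succAbove (α := fun _ => Ordinal.{0}) j α y i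
      have hmem : ∀ i, x i ∈ A i := by
        intro i
        rcases eq_or_ne i j with rfl | hne'
        · rw [hxj]; exact hαA
        · obtain ⟨i', rfl⟩ := Fin.exists_succAbove_eq hne'
          rw [hxs]; exact (hy i').1
      have hmax : ∀ i, i ≠ j → x i < x j := by
        intro i hne'
        obtain ⟨i', rfl⟩ := Fin.exists_succAbove_eq hne'
        rw [hxs, hxj]; exact (hy i').2
      have hxk := hk2 x hmem
      rw [L1 x j hmax] at hxk
      have h2 : (fun i => E (x j) (x (j.succAbove i))) = z := by
        funext i; rw [hxj, hxs]; exact hyE i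
      rw [h2] at hxk
      rw [← hxk, Nat.unpair_pair]
  · -- Bad case: two indices whose sets converge to the same sup; the color's first
    -- component distinguishes them.
    push_neg at hgood
    have hlt : ∀ j, ∀ α ∈ A j, ∃ i, i ≠ j ∧ α < σ i := by
      intro j α hα
      obtain ⟨i, hij, hni⟩ := hgood j α hα
      refine ⟨i, hij, lt_of_not_ge fun hl => Set.Finite.not_infinite hni ?_⟩
      exact (hσmem i).mono (Set.inter_subset_inter_right _ (Set.Iio_subset_Iio hl))
    obtain ⟨i₀, hi₀⟩ := Finite.exists_max σ
    have hub : ∀ i, ∀ α ∈ A i, α < σ i₀ := by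
      intro i α hα
      obtain ⟨i', _, h⟩ := hlt i α hα
      exact h.trans_le (hi₀ i')
    have hσpos : 0 < σ i₀ := by
      obtain ⟨α, hα⟩ := (hAinf i₀).nonempty
      exact (zero_le : (0 : Ordinal.{0}) ≤ α).trans_lt (hub i₀ α hα)
    have h2 : ∃ j, j ≠ i₀ ∧ σ i₀ ≤ σ j := by
      by_contra hcon
      push_neg at hcon
      have hsub : A i₀ ⊆ Set.Iio ((Finset.univ.erase i₀).sup σ) := by
        intro α hα
        obtain ⟨i, hne', h⟩ := hlt i₀ α hα
        exact h.trans_le (Finset.le_sup (Finset.mem_erase.2 ⟨hne', Finset.mem_univ i⟩))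
      have hle' : σ i₀ ≤ (Finset.univ.erase i₀).sup σ :=
        hle i₀ _ ((hAinf i₀).mono (Set.subset_inter Set.Subset.rfl hsub))
      have h3 : (Finset.univ.erase i₀).sup σ < σ i₀ :=
        (Finset.sup_lt_iff hσpos).2 fun i hi => hcon i (Finset.mem_erase.1 hi).1
      exact absurd hle' h3.not_ge
    obtain ⟨j₁, hnej, hσj₁⟩ := h2
    have T : ∀ j, σ i₀ ≤ σ j → ∃ x : Fin (n + 1) → Ordinal.{0},
        (∀ i, x i ∈ A i) ∧ ∀ i, i ≠ j → x i < x j := by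
      intro j hσj
      choose m hm using fun i => (hAinf i).nonempty
      set μ := Finset.univ.sup m with hμd
      have hμlt : μ < σ i₀ := (Finset.sup_lt_iff hσpos).2 fun i _ => hub i (m i) (hm i)
      have hfin2 : (A j ∩ Set.Iic μ).Finite := by
        have hsub : A j ∩ Set.Iic μ ⊆ (A j ∩ Set.Iio μ) ∪ {μ} := by
          rintro β ⟨hβA, hβ⟩
          rcases lt_or_eq_of_le (show β ≤ μ from hβ) with h | h
          · exact Or.inl ⟨hβA, h⟩
          · exact Or.inr h
        exact Set.Finite.subset
          ((hfin j μ (hμlt.trans_le hσj)).union (Set.finite_singleton μ)) hsub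
      obtain ⟨α, hαA, hαn⟩ := ((hAinf j).diff hfin2).nonempty
      have hμα : μ < α := by
        by_contra h
        exact hαn ⟨hαA, not_lt.1 h⟩
      refine ⟨fun i => if i = j then α else m i, ?_, ?_⟩
      · intro i
        rcases eq_or_ne i j with rfl | h
        · simpa using hαA
        · show (if i = j then α else m i) ∈ A i
          rw [if_neg h]; exact hm i
      · intro i h
        show (if i = j then α else m i) < (if j = j then α else m j)
        rw [if_neg h, if_pos rfl]
        exact (Finset.le_sup (Finset.mem_univ i)).trans_lt hμα
    obtain ⟨x₀, hx₀A, hx₀⟩ := T i₀ le_rfl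
    obtain ⟨x₁, hx₁A, hx₁⟩ := T j₁ hσj₁
    have e0 := hk2 x₀ hx₀A
    rw [L1 x₀ i₀ hx₀] at e0
    have e1 := hk2 x₁ hx₁A
    rw [L1 x₁ j₁ hx₁] at e1
    have hval : i₀.val = j₁.val := by
      have h := congrArg (fun t => (Nat.unpair t).1) (e0.trans e1.symm)
      simpa [Nat.unpair_pair] using h
    exact hnej (Fin.val_injective hval.symm)
end

section
/- For every n with 1 ≤ n < ω, Θ_n ≥ ℵ_n; equivalently, there exists a function f : (ℵ_{n−1})^n → ω that is not constant on any product ∏_{i<n} A_i of n infinite subsets A_i ⊆ ℵ_{n−1}. -/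
open Cardinal Set

private lemma exists_inj' (β : Ordinal.{0}) (c : Cardinal.{0}) (h : β.card ≤ c) :
    ∃ e : Ordinal.{0} → Ordinal.{0}, Set.InjOn e (Set.Iio β) ∧ ∀ x < β, e x < c.ord := by
  have h1 : #(Set.Iio β) ≤ #(Set.Iio c.ord) := by
    rw [Ordinal.mk_Iio_ordinal, Ordinal.mk_Iio_ordinal, Cardinal.lift_le, Cardinal.card_ord]
    exact h
  obtain ⟨emb⟩ := Cardinal.le_def _ _ |>.mp h1
  refine ⟨fun x => if hx : x < β then (emb ⟨x, hx⟩ : Ordinal.{0}) else 0, ?_, ?_⟩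
  · intro x hx y hy hxy
    simp only [] at hxy
    rw [dif_pos (show x < β from hx), dif_pos (show y < β from hy)] at hxy
    exact congrArg Subtype.val (emb.injective (Subtype.ext hxy))
  · intro x hx
    simp only [dif_pos hx]
    exact (emb ⟨x, hx⟩).2

/-- A global choice of "injections `β → c`". -/
noncomputable def stmt14inj (c : Cardinal.{0}) (β : Ordinal.{0}) : Ordinal.{0} → Ordinal.{0} :=
  if h : β.card ≤ c then (exists_inj' β c h).choose else id

private lemma stmt14inj_spec (c : Cardinal.{0}) (β : Ordinal.{0}) (h : β.card ≤ c) :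
    Set.InjOn (stmt14inj c β) (Set.Iio β) ∧ ∀ x < β, stmt14inj c β x < c.ord := by
  rw [stmt14inj, dif_pos h]
  exact (exists_inj' β c h).choose_spec

/-- The pattern of comparisons of the coordinates of a tuple, coded as a natural number. -/
noncomputable def stmt14patt {n : ℕ} (x : Fin n → Ordinal.{0}) : ℕ :=
  Encodable.encode (fun p : Fin n × Fin n => decide (x p.1 < x p.2))

/-- The payload: if there is a (necessarily unique) strictly largest coordinate `x j`,
apply `g` to the images of the other coordinates under the chosen injection from `x j`. -/
noncomputable def stmt14pay {n : ℕ} (c : Cardinal.{0}) (g : (Fin n → Ordinal.{0}) → ℕ)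
    (x : Fin (n + 1) → Ordinal.{0}) : ℕ :=
  if h : ∃ j : Fin (n + 1), ∀ i, i ≠ j → x i < x j then
    g (fun i => stmt14inj c (x h.choose) (x (h.choose.succAbove i)))
  else 0

private lemma stmt14key (m : ℕ) :
    ∃ f : (Fin (m + 1) → Ordinal.{0}) → ℕ,
      NotConstOnProducts (Cardinal.aleph ((m : ℕ) : Ordinal.{0})) (m + 1) f := by
  induction m with
  | zero =>
    refine ⟨fun x => if h : x 0 < Ordinal.omega0 then (Ordinal.lt_omega0.mp h).choose else 0,
      ?_⟩
    intro A hsub hinf ⟨k, hk⟩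
    obtain ⟨s, hs, t, ht, hst⟩ := (hinf 0).nontrivial
    have hord : (Cardinal.aleph ((0 : ℕ) : Ordinal.{0})).ord = Ordinal.omega0 := by
      simp [Cardinal.aleph_zero, Cardinal.ord_aleph0]
    have hsω : s < Ordinal.omega0 := hord ▸ hsub 0 hs
    have htω : t < Ordinal.omega0 := hord ▸ hsub 0 ht
    have hmem : ∀ (u : Ordinal.{0}), u ∈ A 0 → ∀ i, (fun _ : Fin 1 => u) i ∈ A i := by
      intro u hu i
      rw [show i = 0 from Fin.ext (Nat.lt_one_iff.mp i.isLt)]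
      exact hu
    have h1 := hk _ (hmem s hs)
    have h2 := hk _ (hmem t ht)
    simp only [dif_pos hsω] at h1
    simp only [dif_pos htω] at h2
    apply hst
    rw [(Ordinal.lt_omega0.mp hsω).choose_spec, (Ordinal.lt_omega0.mp htω).choose_spec,
      h1, h2]
  | succ m ih =>
    obtain ⟨g, hg⟩ := ih
    set c : Cardinal.{0} := Cardinal.aleph ((m : ℕ) : Ordinal.{0}) with hc
    refine ⟨fun x => Nat.pair (stmt14patt x) (stmt14pay c g x), ?_⟩
    intro A hsub hinf ⟨k, hk⟩
    -- base points
    have hA : ∀ l, ∃ u, u ∈ A l := fun l => (hinf l).nonempty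
    choose a haA using hA
    -- pattern and payload are constant
    have hpatt : ∀ x : Fin (m + 1 + 1) → Ordinal.{0}, (∀ i, x i ∈ A i) →
        stmt14patt x = k.unpair.1 := by
      intro x hx
      rw [← hk x hx, Nat.unpair_pair]
    have hpay : ∀ x : Fin (m + 1 + 1) → Ordinal.{0}, (∀ i, x i ∈ A i) →
        stmt14pay c g x = k.unpair.2 := by
      intro x hx
      rw [← hk x hx, Nat.unpair_pair]
    -- the comparison bits
    have hbit : ∀ i i' : Fin (m + 1 + 1), i ≠ i' → ∀ s ∈ A i, ∀ t ∈ A i',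
        (s < t ↔ a i < a i') := by
      intro i i' hne s hs t ht
      set x : Fin (m + 1 + 1) → Ordinal.{0} :=
        fun l => if l = i then s else if l = i' then t else a l with hxdef
      have hx : ∀ l, x l ∈ A l := by
        intro l
        rcases eq_or_ne l i with rfl | h1
        · simpa [hxdef] using hs
        · rcases eq_or_ne l i' with rfl | h2
          · simpa [hxdef, hne.symm] using ht
          · simpa [hxdef, h1, h2] using haA l
      have h1 := hpatt x hx
      have h2 := hpatt a haA
      have h3 : (fun p : Fin (m + 1 + 1) × Fin (m + 1 + 1) => decide (x p.1 < x p.2)) =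
          (fun p => decide (a p.1 < a p.2)) :=
        Encodable.encode_injective (h1.trans h2.symm)
      have h4 := congrFun h3 (i, i')
      simp only [hxdef, if_pos rfl, if_neg hne.symm] at h4
      exact decide_eq_decide.mp h4
    -- a maximum base point
    obtain ⟨j, hj⟩ := Finite.exists_max a
    -- every other set lies strictly below every element of A j
    have hRj : ∀ i, i ≠ j → ∀ s ∈ A i, ∀ t ∈ A j, s < t := by
      intro i hne s hs t ht
      rw [hbit i j hne s hs t ht]
      rcases lt_or_ge (a i) (a j) with h | h
      · exact h
      · -- then a j ≤ a i, hence a j = a i ; derive a contradiction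
        exfalso
        have hij : a i = a j := le_antisymm (hj i) h
        -- every element of A i equals a j
        have : A i ⊆ {a j} := by
          intro u hu
          have hb1 := hbit i j hne u hu (a j) (haA j)
          have hb2 := hbit j i hne.symm (a j) (haA j) u hu
          rw [hij] at hb1 hb2
          simp only [lt_irrefl, iff_false] at hb1 hb2
          exact le_antisymm (not_lt.mp hb2) (not_lt.mp hb1)
        exact (hinf i) (Set.Finite.subset (Set.finite_singleton _) this)
    -- β := a j works as a top point
    set β : Ordinal.{0} := a j with hβ
    have hAsub : ∀ i, i ≠ j → A i ⊆ Set.Iio β := fun i hne s hs =>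
      hRj i hne s hs β (haA j)
    have hcard : β.card ≤ c := by
      have h1 : β < (Cardinal.aleph (((m + 1 : ℕ)) : Ordinal.{0})).ord := hsub j (haA j)
      rw [Cardinal.lt_ord] at h1
      have h2 : (((m + 1 : ℕ)) : Ordinal.{0}) = Order.succ ((m : ℕ) : Ordinal.{0}) := by
        rw [Nat.cast_succ, Ordinal.add_one_eq_succ]
      rw [h2, Cardinal.aleph_succ, Order.lt_succ_iff] at h1
      exact h1
    obtain ⟨hinj, hlt⟩ := stmt14inj_spec c β hcard
    -- the image sets
    set B : Fin (m + 1) → Set Ordinal.{0} :=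
      fun i => stmt14inj c β '' A (j.succAbove i) with hB
    refine hg B ?_ ?_ ⟨k.unpair.2, ?_⟩
    · rintro i _ ⟨s, hs, rfl⟩
      exact hlt s (hAsub _ (Fin.succAbove_ne j i) hs)
    · intro i
      exact (Set.infinite_image_iff (hinj.mono (hAsub _ (Fin.succAbove_ne j i)))).mpr
        (hinf _)
    · intro y hy
      choose z hz hz2 using fun i => hy i
      set x : Fin (m + 1 + 1) → Ordinal.{0} := j.insertNth β z with hxdef
      have hxj : x j = β := by rw [hxdef]; exact Fin.insertNth_apply_same (α := fun _ => Ordinal.{0}) j β z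
      have hxs : ∀ i, x (j.succAbove i) = z i := by
        intro i; rw [hxdef]; exact Fin.insertNth_apply_succAbove (α := fun _ => Ordinal.{0}) j β z i
      have hx : ∀ l, x l ∈ A l := by
        intro l
        rcases eq_or_ne l j with heq | hne
        · rw [heq, hxj]; exact haA j
        · obtain ⟨i, rfl⟩ := Fin.exists_succAbove_eq hne
          rw [hxs]; exact hz i
      have hP : ∃ j' : Fin (m + 1 + 1), ∀ i, i ≠ j' → x i < x j' := by
        refine ⟨j, fun i hne => ?_⟩
        rw [hxj]
        exact hAsub i hne (hx i)
      have hchoose : hP.choose = j := by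
        by_contra hne
        have h1 := hP.choose_spec j (fun h => hne h.symm)
        have h2 : x hP.choose < x j := by
          rw [hxj]
          exact hAsub _ hne (hx _)
        exact absurd h1 (asymm h2)
      have := hpay x hx
      rw [stmt14pay, dif_pos hP, hchoose, hxj] at this
      rw [← this]
      congr 1
      funext i
      rw [hxs, hz2]
  
/-- Corollary 5.4: `Θ_n ≥ ℵ_n` for all `1 ≤ n < ω`: there is a
function `f : (ℵ_{n-1})^n → ω` that is not constant on any product of `n` infinite
subsets of `ℵ_{n-1}`. -/
theorem stmt14 (n : ℕ) (hn : 1 ≤ n) :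
    ∃ f : (Fin n → Ordinal.{0}) → ℕ,
      NotConstOnProducts (Cardinal.aleph ((n - 1 : ℕ) : Ordinal.{0})) n f := by
  obtain ⟨m, rfl⟩ : ∃ m, n = m + 1 := ⟨n - 1, (Nat.succ_pred_eq_of_pos hn).symm⟩
  simpa using stmt14key m
end

section
/- Suppose that κ ≤ ν are infinite cardinals and λ is a cardinal with λ ≤ ν^{<κ}. Then there exists an injective sequence ⟨x_η : η < λ⟩ of subsets of ν, each of cardinality less than κ, such that for all distinct η, ξ < λ, neither x_η ⊆ x_ξ nor x_ξ ⊆ x_η. -/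
open Cardinal Set

noncomputable section

namespace Stmt18

variable (κ ν : Cardinal.{0})

abbrev T : Type 1 := ↥(Set.Iio κ.ord) × ↥(Set.Iio ν.ord) × ↥(Set.Iio ν.ord)

abbrev Sg : Type 1 := Σ c : ↥(Set.Iio κ), (↥(Set.Iio (c : Cardinal).ord) → ↥(Set.Iio ν.ord))

variable {κ ν}

lemma ord_lt_kord (c : ↥(Set.Iio κ)) : ((c : Cardinal).ord : Ordinal) < κ.ord :=
  Cardinal.ord_lt_ord.2 c.2

lemma ord_lt_vord (hkv : κ ≤ ν) (c : ↥(Set.Iio κ)) : ((c : Cardinal).ord : Ordinal) < ν.ord :=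
  Cardinal.ord_lt_ord.2 (lt_of_lt_of_le c.2 hkv)

lemma zero_lt_vord (hν : ℵ₀ ≤ ν) : (0 : Ordinal) < ν.ord := by
  have : (0 : Cardinal) < ν := lt_of_lt_of_le aleph0_pos hν
  simpa using Cardinal.ord_lt_ord.2 this

/-- the code of a pair (c, f): graph of f tagged with c, plus a marker element. -/
def code (hν : ℵ₀ ≤ ν) (hkv : κ ≤ ν) (p : T κ ν ↪ ↥(Set.Iio ν.ord)) (s : Sg κ ν) :
    Set Ordinal.{0} :=
  (Set.range fun α : ↥(Set.Iio (s.1 : Cardinal).ord) =>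
    ((p ⟨⟨(s.1 : Cardinal).ord, ord_lt_kord s.1⟩,
        ⟨(α : Ordinal), lt_trans α.2 (ord_lt_vord hkv s.1)⟩, s.2 α⟩ : ↥(Set.Iio ν.ord)) : Ordinal))
  ∪ {((p ⟨⟨(s.1 : Cardinal).ord, ord_lt_kord s.1⟩,
        ⟨(s.1 : Cardinal).ord, ord_lt_vord hkv s.1⟩,
        ⟨0, zero_lt_vord hν⟩⟩ : ↥(Set.Iio ν.ord)) : Ordinal)}

lemma code_subset_Iio (hν : ℵ₀ ≤ ν) (hkv : κ ≤ ν) (p : T κ ν ↪ ↥(Set.Iio ν.ord)) (s : Sg κ ν) :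
    code hν hkv p s ⊆ Set.Iio ν.ord := by
  rintro o (⟨α, rfl⟩ | h)
  · exact (p _).2
  · rw [Set.mem_singleton_iff] at h
    rw [h]; exact (p _).2

lemma code_card (hk : ℵ₀ ≤ κ) (hν : ℵ₀ ≤ ν) (hkv : κ ≤ ν) (p : T κ ν ↪ ↥(Set.Iio ν.ord))
    (s : Sg κ ν) : #(code hν hkv p s) < Cardinal.lift.{1,0} κ := by
  have h1 : #(code hν hkv p s) ≤ Cardinal.lift.{1,0} (s.1 : Cardinal) + 1 := by
    refine le_trans (mk_union_le _ _) ?_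
    gcongr
    · refine le_trans mk_range_le ?_
      rw [Ordinal.mk_Iio_ordinal, Cardinal.card_ord]
    · rw [mk_singleton]
  refine lt_of_le_of_lt h1 ?_
  have hc : Cardinal.lift.{1,0} (s.1 : Cardinal) < Cardinal.lift.{1,0} κ :=
    Cardinal.lift_lt.2 s.1.2
  rcases lt_or_ge (Cardinal.lift.{1,0} (s.1 : Cardinal)) ℵ₀ with h | h
  · calc Cardinal.lift.{1,0} (s.1 : Cardinal) + 1 < ℵ₀ := add_lt_aleph0 h one_lt_aleph0
      _ ≤ Cardinal.lift.{1,0} κ := by simpa using Cardinal.lift_le.{1}.2 hk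
  · rwa [Cardinal.add_one_eq h]

/-- codes are an antichain: inclusion implies equality. -/
lemma code_subset_inj (hν : ℵ₀ ≤ ν) (hkv : κ ≤ ν) (p : T κ ν ↪ ↥(Set.Iio ν.ord))
    {s t : Sg κ ν} (hst : code hν hkv p s ⊆ code hν hkv p t) : s = t := by
  obtain ⟨c, f⟩ := s
  obtain ⟨d, g⟩ := t
  have hm := hst (Set.mem_union_right _ (Set.mem_singleton _))
  have hcd : c = d := by
    rcases hm with ⟨α, hα⟩ | hα
    · exfalso
      have heq := p.injective (Subtype.ext hα.symm)
      have h1 : ((c : Cardinal).ord : Ordinal) = (d : Cardinal).ord :=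
        congrArg (fun x => ((x.1 : Ordinal))) heq
      have h2 : ((c : Cardinal).ord : Ordinal) = (α : Ordinal) :=
        congrArg (fun x => ((x.2.1 : Ordinal))) heq
      have h3 : (α : Ordinal) < (d : Cardinal).ord := α.2
      rw [← h2, ← h1] at h3
      exact absurd h3 (lt_irrefl _)
    · rw [Set.mem_singleton_iff] at hα
      have heq := p.injective (Subtype.ext hα)
      have h1 : ((c : Cardinal).ord : Ordinal) = (d : Cardinal).ord :=
        congrArg (fun x => ((x.1 : Ordinal))) heq
      exact Subtype.ext (Cardinal.ord_injective (by simpa using h1))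
  subst hcd
  have hfg : f = g := by
    funext α
    have hα := hst (Set.mem_union_left _ ⟨α, rfl⟩)
    rcases hα with ⟨β, hβ⟩ | hβ
    · have heq := p.injective (Subtype.ext hβ)
      have h2 : (β : Ordinal) = (α : Ordinal) :=
        congrArg (fun x => ((x.2.1 : Ordinal))) heq
      have h3 : g β = f α := congrArg (fun x => x.2.2) heq
      have hβα : β = α := Subtype.ext h2
      rw [← h3, hβα]
    · exfalso
      rw [Set.mem_singleton_iff] at hβ
      have heq := p.injective (Subtype.ext hβ)
      have h2 : (α : Ordinal) = (c : Cardinal).ord :=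
        congrArg (fun x => ((x.2.1 : Ordinal))) heq
      exact absurd h2 (ne_of_lt α.2)
  rw [hfg]

end Stmt18

end

/-- from the proof of Proposition 3.12: if `κ ≤ ν` are infinite
cardinals and `λ ≤ ν^{<κ}`, then there is an injective sequence `⟨x_η : η < λ⟩` of
subsets of `ν` of cardinality `< κ` that is an antichain under inclusion. -/
theorem stmt18 (κ ν lam : Cardinal.{0}) (hk : ℵ₀ ≤ κ) (hkv : κ ≤ ν)
    (hlam : lam ≤ ν ^< κ) :
    ∃ x : Ordinal.{0} → Set Ordinal.{0},
      (∀ η < lam.ord, x η ⊆ Set.Iio ν.ord ∧ #(x η) < Cardinal.lift.{1,0} κ) ∧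
      (∀ η < lam.ord, ∀ ξ < lam.ord, η ≠ ξ → ¬ x η ⊆ x ξ) := by
  have hν : ℵ₀ ≤ ν := hk.trans hkv
  -- the pairing injection
  have hT : #(Stmt18.T κ ν) ≤ #(↥(Set.Iio ν.ord)) := by
    rw [Cardinal.mk_prod, Cardinal.mk_prod]
    simp only [Cardinal.lift_id, Ordinal.mk_Iio_ordinal, Cardinal.card_ord]
    rw [← Cardinal.lift_mul, ← Cardinal.lift_mul, Cardinal.lift_le]
    calc κ * (ν * ν) ≤ ν * (ν * ν) := by gcongr
      _ = ν := by rw [Cardinal.mul_eq_self hν, Cardinal.mul_eq_self hν]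
  obtain ⟨p⟩ := ((Cardinal.le_def _ _).1 hT)
  -- the injection from Iio lam.ord into Sg
  have hSg : #(↥(Set.Iio lam.ord)) ≤ #(Stmt18.Sg κ ν) := by
    rw [Ordinal.mk_Iio_ordinal, Cardinal.card_ord]
    refine le_trans (Cardinal.lift_le.2 hlam) ?_
    rw [Cardinal.powerlt]
    refine Cardinal.lift_iSup_le ?_ ?_
    · rw [← Set.image_eq_range]
      exact Cardinal.bddAbove_image _ bddAbove_Iio
    · intro c
      have h1 : Cardinal.lift.{1,0} (ν ^ (c : Cardinal)) =
          #(↥(Set.Iio (c : Cardinal).ord) → ↥(Set.Iio ν.ord)) := by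
        rw [Cardinal.mk_arrow, Ordinal.mk_Iio_ordinal, Ordinal.mk_Iio_ordinal,
          Cardinal.card_ord, Cardinal.card_ord, Cardinal.lift_id, Cardinal.lift_id,
          Cardinal.lift_power]
      rw [h1]
      exact Cardinal.mk_le_of_injective (f := fun f => (⟨c, f⟩ : Stmt18.Sg κ ν))
        fun f g h => by simpa using h
  obtain ⟨J⟩ := ((Cardinal.le_def _ _).1 hSg)
  refine ⟨fun η => if h : η < lam.ord then Stmt18.code hν hkv p (J ⟨η, h⟩) else ∅, ?_, ?_⟩
  · intro η hη
    dsimp only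
    rw [dif_pos hη]
    exact ⟨Stmt18.code_subset_Iio hν hkv p _, Stmt18.code_card hk hν hkv p _⟩
  · intro η hη ξ hξ hne hsub
    dsimp only at hsub
    rw [dif_pos hη, dif_pos hξ] at hsub
    have := J.injective (Stmt18.code_subset_inj hν hkv p hsub)
    exact hne (congrArg Subtype.val this)
end
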